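/- Let g(s) be a strictly proper real rational function with no poles on the imaginary axis, an odd total number (with multiplicity) of poles with positive real part, and g(0) ≠ 0. Suppose the constant perturbation δ₀ := 1/g(0) achieves 0-stability for g, i.e., writing g = n/d coprime, the characteristic polynomial d(s) − (1/g(0)) n(s) has a simple root at 0 and all other roots with negative real part. Then the robust instability radius is exactly ρ*(g) = 1/|g(0)|. -/

import Mathlib

set_option maxHeartbeats 1000000


open Polynomial

/-- Evaluation of the real rational function `n/d` at a complex argument. -/
noncomputable def ratEval (n d : Polynomial ℝ) (s : ℂ) : ℂ :=
  (n.map (algebraMap ℝ ℂ)).eval s / (d.map (algebraMap ℝ ℂ)).eval s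

/-- All complex poles of `δ = b/a` (i.e. roots of `a`) have negative real part. -/
def StableRat (a : Polynomial ℝ) : Prop :=
  ∀ z : ℂ, (a.map (algebraMap ℝ ℂ)).eval z = 0 → z.re < 0

/-- `δ = b/a` is a proper stable real rational function that internally stabilizes
`g = n/d` under positive feedback: every root of `a d − b n` has negative real part. -/
def Stabilizes (b a n d : Polynomial ℝ) : Prop :=
  a ≠ 0 ∧ IsCoprime b a ∧ b.degree ≤ a.degree ∧ StableRat a ∧
    ∀ z : ℂ, ((a * d - b * n).map (algebraMap ℝ ℂ)).eval z = 0 → z.re < 0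

/-- `sup_{ω ∈ ℝ} |g(iω)|` for `g = n/d`. -/
noncomputable def hinfNorm (n d : Polynomial ℝ) : ℝ :=
  ⨆ ω : ℝ, ‖ratEval n d (ω * Complex.I)‖

/-- Number of poles (roots of `d`), with multiplicity, in the open right half plane. -/
noncomputable def orhpCount (d : Polynomial ℝ) : ℕ :=
  Multiset.card ((d.map (algebraMap ℝ ℂ)).roots.filter (fun z => 0 < z.re))

/-- Robust instability radius of `g = n/d`: infimum of `‖δ‖_{H∞}` over `δ ∈ S(g)`
(`+∞` if `S(g)` is empty). -/
noncomputable def RIR (n d : Polynomial ℝ) : ENNReal :=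
  sInf { r : ENNReal | ∃ b a : Polynomial ℝ,
    Stabilizes b a n d ∧ r = ENNReal.ofReal (hinfNorm b a) }

/-- `μ(e)` : infimum of `‖δ‖_{H∞}` over `δ ∈ S(g)` with `δ(0) = e`. -/
noncomputable def Mu (n d : Polynomial ℝ) (e : ℝ) : ENNReal :=
  sInf { r : ENNReal | ∃ b a : Polynomial ℝ,
    Stabilizes b a n d ∧ b.eval 0 / a.eval 0 = e ∧ r = ENNReal.ofReal (hinfNorm b a) }

/-- The characteristic polynomial `chp` achieves `ω_c`-stability: simple root at `iω_c`
(and at `−iω_c` when `ω_c ≠ 0`), all other roots with negative real part. -/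
def OmegaStable (chp : Polynomial ℝ) (ωc : ℝ) : Prop :=
  Polynomial.rootMultiplicity ((ωc : ℂ) * Complex.I) (chp.map (algebraMap ℝ ℂ)) = 1 ∧
  (ωc ≠ 0 → Polynomial.rootMultiplicity (-((ωc : ℂ) * Complex.I)) (chp.map (algebraMap ℝ ℂ)) = 1) ∧
  ∀ z : ℂ, (chp.map (algebraMap ℝ ℂ)).eval z = 0 →
    z ≠ (ωc : ℂ) * Complex.I → z ≠ -((ωc : ℂ) * Complex.I) → z.re < 0

lemma mapEvalReal (p : ℝ[X]) (x : ℝ) :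
    Polynomial.eval ((x : ℝ) : ℂ) (p.map (algebraMap ℝ ℂ)) = ((Polynomial.eval x p : ℝ) : ℂ) := by
  rw [Polynomial.eval_map, show (((x : ℝ)) : ℂ) = algebraMap ℝ ℂ x from rfl]
  exact Polynomial.eval₂_at_apply _ x

lemma signIff : ∀ (k : ℕ) (p : ℝ[X]), p.natDegree ≤ k → p ≠ 0 →
    (∀ z : ℂ, (p.map (algebraMap ℝ ℂ)).eval z = 0 → z.re ≠ 0) →
    (0 < p.eval 0 * p.leadingCoeff ↔ Even (orhpCount p)) := by
  intro k
  induction k with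
  | zero =>
    intro p hdeg hp him
    have := Polynomial.eq_C_of_natDegree_le_zero hdeg
    have hc : p.coeff 0 ≠ 0 := by
      intro h; apply hp; rw [this, h, map_zero]
    constructor
    · intro _
      have : orhpCount p = 0 := by
        unfold orhpCount
        rw [this]
        simp [Polynomial.map_C, Polynomial.roots_C]
      simp [this]
    · intro _
      rw [this]
      simp only [Polynomial.eval_C, Polynomial.leadingCoeff_C]
      exact mul_self_pos.mpr hc
  | succ k ih =>
    intro p hdeg hp him
    by_cases hk : p.natDegree ≤ k
    · exact ih p hk hp him
    have hdeg' : p.natDegree = k + 1 := le_antisymm hdeg (not_le.mp hk)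
    have hmapne : p.map (algebraMap ℝ ℂ) ≠ 0 := by
      simpa [Polynomial.map_ne_zero_iff (algebraMap ℝ ℂ).injective] using hp
    obtain ⟨z, hz⟩ : ∃ z : ℂ, (p.map (algebraMap ℝ ℂ)).eval z = 0 := by
      have hdm : 0 < (p.map (algebraMap ℝ ℂ)).degree := by
        rw [Polynomial.degree_map]
        exact Polynomial.natDegree_pos_iff_degree_pos.mp (by omega)
      exact Complex.exists_root hdm
    have hzre : z.re ≠ 0 := him z hz
    have hp0 : p.eval 0 ≠ 0 := by
      intro h
      apply him 0 _ rfl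
      have := mapEvalReal p 0
      simp only [Complex.ofReal_zero] at this
      rw [this, h]
      exact Complex.ofReal_zero
    by_cases him0 : z.im = 0
    · -- real root r = z.re
      set r := z.re with hr
      have hzr : z = (r : ℂ) := by
        apply Complex.ext
        · simp [hr]
        · simp [him0]
      have hre : p.eval r = 0 := by
        have h2 := hz
        rw [hzr, mapEvalReal] at h2
        exact_mod_cast h2
      obtain ⟨q, hq⟩ := Polynomial.dvd_iff_isRoot.mpr hre
      have hqne : q ≠ 0 := by rintro rfl; simp at hq; exact hp hq
      have hXC : (X - C r : ℝ[X]) ≠ 0 := Polynomial.X_sub_C_ne_zero r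
      have hnd : p.natDegree = 1 + q.natDegree := by
        rw [hq, Polynomial.natDegree_mul hXC hqne, Polynomial.natDegree_X_sub_C]
      have hmap : p.map (algebraMap ℝ ℂ)
          = (X - C (r : ℂ)) * q.map (algebraMap ℝ ℂ) := by
        rw [hq, Polynomial.map_mul, Polynomial.map_sub, Polynomial.map_X, Polynomial.map_C]
        rfl
      have himq : ∀ w : ℂ, (q.map (algebraMap ℝ ℂ)).eval w = 0 → w.re ≠ 0 := by
        intro w hw
        apply him w
        rw [hmap]
        simp [hw]
      have hqmapne : q.map (algebraMap ℝ ℂ) ≠ 0 := by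
        simpa [Polynomial.map_ne_zero_iff (algebraMap ℝ ℂ).injective] using hqne
      have hroots : (p.map (algebraMap ℝ ℂ)).roots
          = {(r : ℂ)} + (q.map (algebraMap ℝ ℂ)).roots := by
        rw [hmap, Polynomial.roots_mul (by rw [← hmap]; exact hmapne), Polynomial.roots_X_sub_C]
      have hcount : orhpCount p = (if 0 < r then 1 else 0) + orhpCount q := by
        unfold orhpCount
        rw [hroots, Multiset.filter_add, Multiset.card_add, Multiset.filter_singleton]
        simp only [Complex.ofReal_re]
        by_cases hrpos : 0 < r <;> simp [hrpos]
      have hev : p.eval 0 = -r * q.eval 0 := by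
        rw [hq]; simp
      have hlc : p.leadingCoeff = q.leadingCoeff := by
        rw [hq, Polynomial.leadingCoeff_mul, Polynomial.leadingCoeff_X_sub_C, one_mul]
      have hA : q.eval 0 * q.leadingCoeff ≠ 0 := by
        have h1 : q.eval 0 ≠ 0 := by
          intro h; apply hp0; rw [hev, h, mul_zero]
        exact mul_ne_zero h1 (Polynomial.leadingCoeff_ne_zero.mpr hqne)
      have hih := ih q (by omega) hqne himq
      rw [hcount, hev, hlc]
      by_cases hrpos : 0 < r
      · rw [if_pos hrpos, add_comm, Nat.even_add_one, ← hih]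
        constructor
        · intro h h2; nlinarith
        · intro h
          have h3 : q.eval 0 * q.leadingCoeff < 0 := lt_of_le_of_ne (not_lt.mp h) hA
          nlinarith
      · have hrneg : r < 0 := lt_of_le_of_ne (not_lt.mp hrpos) hzre
        rw [if_neg hrpos, zero_add, ← hih]
        constructor
        · intro h; nlinarith
        · intro h; nlinarith
    · -- nonreal root, quadratic factor
      have hz0 : Polynomial.aeval z p = 0 := by
        rw [Polynomial.aeval_def, ← Polynomial.eval_map]; exact hz
      obtain ⟨q, hq⟩ := p.quadratic_dvd_of_aeval_eq_zero_im_ne_zero hz0 him0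
      set q2 : ℝ[X] := X ^ 2 - C (2 * z.re) * X + C (‖z‖ ^ 2) with hq2def
      have hq2map : q2.map (algebraMap ℝ ℂ)
          = (X - C ((starRingEnd ℂ) z)) * (X - C z) := by
        calc q2.map (algebraMap ℝ ℂ)
            = X ^ 2 - C ((2 * z.re : ℝ) : ℂ) * X + C (((‖z‖ : ℝ) : ℂ) ^ 2) := by
              simp [hq2def]
          _ = (X - C ((starRingEnd ℂ) z)) * (X - C z) := by
              rw [← Complex.add_conj, map_add, ← Complex.mul_conj', map_mul]
              ring
      have hq2ne : q2 ≠ 0 := by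
        intro h
        have := congrArg (Polynomial.map (algebraMap ℝ ℂ)) h
        rw [hq2map] at this
        simp at this
        rcases this with h1 | h1 <;> exact Polynomial.X_sub_C_ne_zero _ h1
      have hqne : q ≠ 0 := by rintro rfl; simp at hq; exact hp hq
      have hq2nd : q2.natDegree = 2 := by
        have : (q2.map (algebraMap ℝ ℂ)).natDegree = 2 := by
          rw [hq2map, Polynomial.natDegree_mul (Polynomial.X_sub_C_ne_zero _)
            (Polynomial.X_sub_C_ne_zero _), Polynomial.natDegree_X_sub_C,
            Polynomial.natDegree_X_sub_C]
        rwa [Polynomial.natDegree_map] at this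
      have hnd : p.natDegree = 2 + q.natDegree := by
        rw [hq, Polynomial.natDegree_mul hq2ne hqne, hq2nd]
      have hmap : p.map (algebraMap ℝ ℂ)
          = ((X - C ((starRingEnd ℂ) z)) * (X - C z)) * q.map (algebraMap ℝ ℂ) := by
        rw [hq, Polynomial.map_mul, hq2map]
      have himq : ∀ w : ℂ, (q.map (algebraMap ℝ ℂ)).eval w = 0 → w.re ≠ 0 := by
        intro w hw
        apply him w
        rw [hmap]
        simp [hw]
      have hroots : (p.map (algebraMap ℝ ℂ)).roots
          = ({(starRingEnd ℂ) z} + {z}) + (q.map (algebraMap ℝ ℂ)).roots := by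
        rw [hmap, Polynomial.roots_mul (by rw [← hmap]; exact hmapne),
          Polynomial.roots_mul (mul_ne_zero (Polynomial.X_sub_C_ne_zero _)
            (Polynomial.X_sub_C_ne_zero _)), Polynomial.roots_X_sub_C, Polynomial.roots_X_sub_C]
      have hcount : orhpCount p = (if 0 < z.re then 2 else 0) + orhpCount q := by
        unfold orhpCount
        rw [hroots, Multiset.filter_add, Multiset.card_add, Multiset.filter_add,
          Multiset.card_add, Multiset.filter_singleton, Multiset.filter_singleton]
        simp only [Complex.conj_re]
        by_cases hrpos : 0 < z.re <;> simp [hrpos]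
      have hev : p.eval 0 = ‖z‖ ^ 2 * q.eval 0 := by
        rw [hq]; simp [hq2def]
      have hlc : p.leadingCoeff = q.leadingCoeff := by
        have hq2monic : q2.Monic := by
          have h2 : ((X - C ((starRingEnd ℂ) z)) * (X - C z)).Monic :=
            (Polynomial.monic_X_sub_C _).mul (Polynomial.monic_X_sub_C _)
          have h3 : (q2.map (algebraMap ℝ ℂ)).Monic := hq2map ▸ h2
          exact Polynomial.monic_of_injective (algebraMap ℝ ℂ).injective h3
        rw [hq, Polynomial.leadingCoeff_mul, hq2monic.leadingCoeff, one_mul]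
      have hz2pos : (0:ℝ) < ‖z‖ ^ 2 := by
        have hzne : z ≠ 0 := fun h => hzre (by rw [h]; simp)
        exact pow_pos (norm_pos_iff.mpr hzne) 2
      have hih := ih q (by omega) hqne himq
      rw [hcount, hev, hlc]
      have heq : (0 < ‖z‖ ^ 2 * q.eval 0 * q.leadingCoeff)
          ↔ (0 < q.eval 0 * q.leadingCoeff) := by
        rw [mul_assoc]
        exact mul_pos_iff_of_pos_left hz2pos
      rw [heq, hih]
      by_cases hrpos : 0 < z.re
      · rw [if_pos hrpos]
        simp [Nat.even_add]
      · rw [if_neg hrpos, zero_add]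

lemma himOfNoImag {p : ℝ[X]} (hnoimag : ∀ ω : ℝ, (p.map (algebraMap ℝ ℂ)).eval ((ω : ℂ) * Complex.I) ≠ 0) :
    ∀ z : ℂ, (p.map (algebraMap ℝ ℂ)).eval z = 0 → z.re ≠ 0 := by
  intro z hz hre
  apply hnoimag z.im
  have : (z.im : ℂ) * Complex.I = z := by
    apply Complex.ext <;> simp [hre]
  rwa [this]

lemma neZeroOfStable {p : ℝ[X]}
    (hroots : ∀ z : ℂ, (p.map (algebraMap ℝ ℂ)).eval z = 0 → z.re < 0) : p ≠ 0 := by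
  intro h
  have := hroots 0 (by rw [h]; simp)
  simp at this

lemma posOfStable {p : ℝ[X]}
    (hroots : ∀ z : ℂ, (p.map (algebraMap ℝ ℂ)).eval z = 0 → z.re < 0) :
    0 < p.eval 0 * p.leadingCoeff := by
  have hp : p ≠ 0 := neZeroOfStable hroots
  have him : ∀ z : ℂ, (p.map (algebraMap ℝ ℂ)).eval z = 0 → z.re ≠ 0 :=
    fun z hz => ne_of_lt (hroots z hz)
  rw [signIff p.natDegree p le_rfl hp him]
  have : orhpCount p = 0 := by
    unfold orhpCount
    rw [Multiset.card_eq_zero, Multiset.filter_eq_nil]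
    intro z hzmem hzre
    have hz : (p.map (algebraMap ℝ ℂ)).eval z = 0 :=
      (Polynomial.mem_roots'.mp hzmem).2
    exact absurd (hroots z hz) (not_lt.mpr (le_of_lt hzre))
  rw [this]
  exact Even.zero

lemma negOfOdd {p : ℝ[X]} (hp : p ≠ 0)
    (him : ∀ z : ℂ, (p.map (algebraMap ℝ ℂ)).eval z = 0 → z.re ≠ 0)
    (hodd : Odd (orhpCount p)) : p.eval 0 * p.leadingCoeff < 0 := by
  have hne : p.eval 0 * p.leadingCoeff ≠ 0 := by
    apply mul_ne_zero _ (Polynomial.leadingCoeff_ne_zero.mpr hp)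
    intro h
    apply him 0 _ rfl
    have := mapEvalReal p 0
    simp only [Complex.ofReal_zero] at this
    rw [this, h]
    exact Complex.ofReal_zero
  have : ¬ (0 < p.eval 0 * p.leadingCoeff) := by
    rw [signIff p.natDegree p le_rfl hp him, ← Nat.not_odd_iff_even]
    simpa using hodd
  cases lt_or_gt_of_ne hne with
  | inl h => exact h
  | inr h => exact absurd h this

lemma evalUpper (p : ℂ[X]) : ∃ C : ℝ, 0 ≤ C ∧
    ∀ z : ℂ, 1 ≤ ‖z‖ → ‖p.eval z‖ ≤ C * ‖z‖ ^ p.natDegree := by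
  refine ⟨∑ i ∈ Finset.range (p.natDegree + 1), ‖p.coeff i‖,
    Finset.sum_nonneg fun i _ => norm_nonneg _, fun z hz => ?_⟩
  rw [Polynomial.eval_eq_sum_range]
  calc ‖∑ i ∈ Finset.range (p.natDegree + 1), p.coeff i * z ^ i‖
      ≤ ∑ i ∈ Finset.range (p.natDegree + 1), ‖p.coeff i * z ^ i‖ := norm_sum_le _ _
    _ ≤ ∑ i ∈ Finset.range (p.natDegree + 1), ‖p.coeff i‖ * ‖z‖ ^ p.natDegree := by
        apply Finset.sum_le_sum
        intro i hi
        rw [norm_mul, norm_pow]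
        apply mul_le_mul_of_nonneg_left _ (norm_nonneg _)
        exact pow_le_pow_right₀ hz (Nat.lt_succ_iff.mp (Finset.mem_range.mp hi))
    _ = (∑ i ∈ Finset.range (p.natDegree + 1), ‖p.coeff i‖) * ‖z‖ ^ p.natDegree := by
        rw [Finset.sum_mul]

lemma evalLower (p : ℂ[X]) (hp : p ≠ 0) : ∃ R : ℝ, 1 ≤ R ∧
    ∀ z : ℂ, R ≤ ‖z‖ →
      ‖p.leadingCoeff‖ / 2 * ‖z‖ ^ p.natDegree ≤ ‖p.eval z‖ := by
  have hL : 0 < ‖p.leadingCoeff‖ :=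
    norm_pos_iff.mpr (Polynomial.leadingCoeff_ne_zero.mpr hp)
  by_cases hn0 : p.natDegree = 0
  · refine ⟨1, le_rfl, fun z hz => ?_⟩
    obtain ⟨c, rfl⟩ : ∃ c, p = C c := ⟨p.coeff 0, (Polynomial.eq_C_of_natDegree_le_zero hn0.le)⟩
    simp only [hn0, pow_zero, mul_one, Polynomial.eval_C, Polynomial.leadingCoeff_C]
    linarith [norm_nonneg c]
  · obtain ⟨C, hC0, hC⟩ := evalUpper p.eraseLead
    set n := p.natDegree with hndef
    have hn1 : 1 ≤ n := Nat.one_le_iff_ne_zero.mpr hn0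
    set L := ‖p.leadingCoeff‖ with hLdef
    refine ⟨max 1 (2 * C / L + 1), le_max_left _ _, fun z hz => ?_⟩
    have hz1 : 1 ≤ ‖z‖ := le_trans (le_max_left _ _) hz
    have hz2 : 2 * C / L + 1 ≤ ‖z‖ := le_trans (le_max_right _ _) hz
    have hel : ‖p.eraseLead.eval z‖ ≤ C * ‖z‖ ^ (n - 1) := by
      refine (hC z hz1).trans (mul_le_mul_of_nonneg_left ?_ hC0)
      apply pow_le_pow_right₀ hz1
      exact le_trans (Polynomial.eraseLead_natDegree_le p) (by omega)
    have heval : p.eval z = p.eraseLead.eval z + p.leadingCoeff * z ^ n := by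
      conv_lhs => rw [← p.eraseLead_add_C_mul_X_pow]
      rw [Polynomial.eval_add, Polynomial.eval_mul, Polynomial.eval_C, Polynomial.eval_pow,
        Polynomial.eval_X]
    have hnorm : L * ‖z‖ ^ n - ‖p.eraseLead.eval z‖ ≤ ‖p.eval z‖ := by
      have h4 := norm_sub_le (p.eraseLead.eval z + p.leadingCoeff * z ^ n) (p.eraseLead.eval z)
      rw [add_sub_cancel_left, norm_mul, norm_pow] at h4
      rw [heval]
      linarith
    have hpow : ‖z‖ ^ n = ‖z‖ ^ (n - 1) * ‖z‖ := by
      rw [← pow_succ]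
      congr 1
      omega
    have hpow1 : (0:ℝ) < ‖z‖ ^ (n - 1) := pow_pos (lt_of_lt_of_le one_pos hz1) _
    have hkey : C * ‖z‖ ^ (n - 1) ≤ L / 2 * ‖z‖ ^ n := by
      have hd : L / 2 * (2 * C / L + 1) = C + L / 2 := by field_simp
      calc C * ‖z‖ ^ (n - 1) ≤ (L / 2 * ‖z‖) * ‖z‖ ^ (n - 1) := by
            apply mul_le_mul_of_nonneg_right _ hpow1.le
            calc C ≤ C + L / 2 := by linarith
              _ = L / 2 * (2 * C / L + 1) := hd.symm
              _ ≤ L / 2 * ‖z‖ := mul_le_mul_of_nonneg_left hz2 (by linarith)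
        _ = L / 2 * ‖z‖ ^ n := by rw [hpow]; ring
    linarith



lemma abs_ratEval (b a : ℝ[X]) (s : ℂ) : ‖ratEval b a s‖
    = ‖(b.map (algebraMap ℝ ℂ)).eval s‖ / ‖(a.map (algebraMap ℝ ℂ)).eval s‖ := by
  unfold ratEval
  exact norm_div _ _

lemma norm_omega_I (ω : ℝ) : ‖((ω : ℂ) * Complex.I)‖ = |ω| := by
  rw [norm_mul, Complex.norm_I, mul_one, Complex.norm_real]
  rfl

lemma bddAboveRat (b a : ℝ[X]) (ha : a ≠ 0) (hdeg : b.natDegree ≤ a.natDegree)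
    (hnz : ∀ ω : ℝ, (a.map (algebraMap ℝ ℂ)).eval ((ω : ℂ) * Complex.I) ≠ 0) :
    BddAbove (Set.range fun ω : ℝ => ‖ratEval b a ((ω : ℂ) * Complex.I)‖) := by
  have hamapne : a.map (algebraMap ℝ ℂ) ≠ 0 := by
    simpa [Polynomial.map_ne_zero_iff (algebraMap ℝ ℂ).injective] using ha
  obtain ⟨C, hC0, hC⟩ := evalUpper (b.map (algebraMap ℝ ℂ))
  obtain ⟨R, hR1, hR⟩ := evalLower (a.map (algebraMap ℝ ℂ)) hamapne
  set L := ‖(a.map (algebraMap ℝ ℂ)).leadingCoeff‖ with hLdef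
  have hL : 0 < L := norm_pos_iff.mpr (Polynomial.leadingCoeff_ne_zero.mpr hamapne)
  have hfar : ∀ ω : ℝ, R ≤ |ω| →
      ‖ratEval b a ((ω : ℂ) * Complex.I)‖ ≤ C / (L / 2) := by
    intro ω hω
    have hω1 : 1 ≤ |ω| := le_trans hR1 hω
    have hnorm : ‖((ω : ℂ) * Complex.I)‖ = |ω| := norm_omega_I ω
    have hnum : ‖(b.map (algebraMap ℝ ℂ)).eval ((ω : ℂ) * Complex.I)‖
        ≤ C * |ω| ^ a.natDegree := by
      refine (hC _ (by rw [hnorm]; exact hω1)).trans ?_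
      rw [hnorm]
      apply mul_le_mul_of_nonneg_left _ hC0
      apply pow_le_pow_right₀ hω1
      rwa [Polynomial.natDegree_map]
    have hden : L / 2 * |ω| ^ a.natDegree
        ≤ ‖(a.map (algebraMap ℝ ℂ)).eval ((ω : ℂ) * Complex.I)‖ := by
      have := hR _ (by rw [hnorm]; exact hω)
      rwa [hnorm, Polynomial.natDegree_map] at this
    have hpowpos : (0:ℝ) < |ω| ^ a.natDegree := pow_pos (lt_of_lt_of_le one_pos hω1) _
    rw [abs_ratEval]
    calc ‖(b.map (algebraMap ℝ ℂ)).eval ((ω : ℂ) * Complex.I)‖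
          / ‖(a.map (algebraMap ℝ ℂ)).eval ((ω : ℂ) * Complex.I)‖
        ≤ (C * |ω| ^ a.natDegree) / (L / 2 * |ω| ^ a.natDegree) :=
          div_le_div₀ (by positivity) hnum (mul_pos (half_pos hL) hpowpos) hden
        _ = C / (L / 2) := by
          rw [mul_div_mul_right _ _ (ne_of_gt hpowpos)]
  have hcont : Continuous fun ω : ℝ => ‖ratEval b a ((ω : ℂ) * Complex.I)‖ := by
    have h1 : Continuous fun ω : ℝ => ((ω : ℂ) * Complex.I) :=
      (Complex.continuous_ofReal.mul continuous_const)
    have hnumc : Continuous fun ω : ℝ =>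
        (b.map (algebraMap ℝ ℂ)).eval ((ω : ℂ) * Complex.I) :=
      (b.map (algebraMap ℝ ℂ)).continuous.comp h1
    have hdenc : Continuous fun ω : ℝ =>
        (a.map (algebraMap ℝ ℂ)).eval ((ω : ℂ) * Complex.I) :=
      (a.map (algebraMap ℝ ℂ)).continuous.comp h1
    simp only [abs_ratEval]
    exact hnumc.norm.div hdenc.norm (fun ω => norm_ne_zero_iff.mpr (hnz ω))
  obtain ⟨M2, hM2⟩ := (isCompact_Icc.image hcont).bddAbove
  refine ⟨max (C / (L / 2)) M2, ?_⟩
  rintro x ⟨ω, rfl⟩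
  by_cases hcase : R ≤ |ω|
  · exact le_trans (hfar ω hcase) (le_max_left _ _)
  · have hmem : ω ∈ Set.Icc (-R) R := by
      have := abs_lt.mp (not_le.mp hcase)
      rw [Set.mem_Icc]
      constructor <;> linarith [this.1, this.2]
    exact le_trans (hM2 (Set.mem_image_of_mem _ hmem)) (le_max_right _ _)



lemma ratEval_zero_abs (b a : ℝ[X]) :
    ‖ratEval b a 0‖ = |b.eval 0| / |a.eval 0| := by
  unfold ratEval
  rw [show (0:ℂ) = ((0:ℝ):ℂ) by simp, mapEvalReal, mapEvalReal, ← Complex.ofReal_div,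
    Complex.norm_real, Real.norm_eq_abs, abs_div]

lemma hinf_ge_zero_val (b a : ℝ[X]) (ha : a ≠ 0) (hdeg : b.natDegree ≤ a.natDegree)
    (hnz : ∀ ω : ℝ, (a.map (algebraMap ℝ ℂ)).eval ((ω : ℂ) * Complex.I) ≠ 0) :
    |b.eval 0| / |a.eval 0| ≤ hinfNorm b a := by
  have h := le_ciSup (bddAboveRat b a ha hdeg hnz) (0 : ℝ)
  simp only [Complex.ofReal_zero, zero_mul] at h
  rw [ratEval_zero_abs] at h
  exact h

lemma lc_sub (b a n d : ℝ[X]) (ha : a ≠ 0) (hd : d ≠ 0) (hdeg : b.degree ≤ a.degree)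
    (hsp : n.degree < d.degree) :
    (a * d - b * n).leadingCoeff = a.leadingCoeff * d.leadingCoeff := by
  have hadne : a * d ≠ 0 := mul_ne_zero ha hd
  have h1 : (b * n).degree < (a * d).degree := by
    rcases eq_or_ne (b * n) 0 with h | h
    · rw [h, Polynomial.degree_zero]
      exact Ne.bot_lt (Polynomial.degree_eq_bot.not.mpr hadne)
    · have hb : b ≠ 0 := fun hb => h (by rw [hb, zero_mul])
      have hn : n ≠ 0 := fun hn => h (by rw [hn, mul_zero])
      rw [Polynomial.degree_mul, Polynomial.degree_mul]
      have hda : a.degree ≠ ⊥ := Polynomial.degree_eq_bot.not.mpr ha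
      calc b.degree + n.degree ≤ a.degree + n.degree := add_le_add_left hdeg _
        _ < a.degree + d.degree := by
          rcases Polynomial.degree_eq_natDegree ha with h2
          rw [h2]
          exact WithBot.add_lt_add_left (by simp) hsp
  have h2 : a * d - b * n = -(b * n) + a * d := by ring
  rw [h2, Polynomial.leadingCoeff_add_of_degree_lt (by rwa [Polynomial.degree_neg]),
    Polynomial.leadingCoeff_mul]

lemma d0ne (d : ℝ[X])
    (hnoimag : ∀ ω : ℝ, (d.map (algebraMap ℝ ℂ)).eval ((ω : ℂ) * Complex.I) ≠ 0) :
    d.eval 0 ≠ 0 := by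
  intro h
  apply hnoimag 0
  simp only [Complex.ofReal_zero, zero_mul]
  rw [show (0:ℂ) = ((0:ℝ):ℂ) by simp, mapEvalReal, h, Complex.ofReal_zero]

lemma lowerBound (n d b a : ℝ[X]) (hd : d ≠ 0) (hsp : n.degree < d.degree)
    (hnoimag : ∀ ω : ℝ, (d.map (algebraMap ℝ ℂ)).eval ((ω : ℂ) * Complex.I) ≠ 0)
    (hodd : Odd (orhpCount d)) (hg0 : n.eval 0 / d.eval 0 ≠ 0)
    (hstab : Stabilizes b a n d) :
    1 / |n.eval 0 / d.eval 0| ≤ hinfNorm b a := by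
  obtain ⟨ha, hcop, hdeg, hstable, hroots⟩ := hstab
  have hd0 : d.eval 0 ≠ 0 := d0ne d hnoimag
  have hn0 : n.eval 0 ≠ 0 := fun h => hg0 (by rw [h, zero_div])
  have ha0 : a.eval 0 ≠ 0 := by
    intro h
    have : ((0:ℝ):ℂ) * Complex.I = 0 := by simp
    have h2 := hstable 0 (by
      rw [show (0:ℂ) = ((0:ℝ):ℂ) by simp, mapEvalReal, h, Complex.ofReal_zero])
    simp at h2
  have hppos := posOfStable hroots
  have hlc : (a * d - b * n).leadingCoeff = a.leadingCoeff * d.leadingCoeff :=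
    lc_sub b a n d ha hd hdeg hsp
  have hdneg : d.eval 0 * d.leadingCoeff < 0 := negOfOdd hd (himOfNoImag hnoimag) hodd
  have hapos : 0 < a.eval 0 * a.leadingCoeff := posOfStable hstable
  have hev : (a * d - b * n).eval 0 = a.eval 0 * d.eval 0 - b.eval 0 * n.eval 0 := by
    simp
  rw [hev, hlc] at hppos
  -- key : |a0 * d0| ≤ |b0 * n0|
  have hkey : |a.eval 0 * d.eval 0| ≤ |b.eval 0 * n.eval 0| := by
    have hLne : a.leadingCoeff * d.leadingCoeff ≠ 0 :=
      mul_ne_zero (Polynomial.leadingCoeff_ne_zero.mpr ha) (Polynomial.leadingCoeff_ne_zero.mpr hd)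
    have hx : a.eval 0 * d.eval 0 * (a.leadingCoeff * d.leadingCoeff) < 0 := by
      nlinarith [mul_pos hapos (neg_pos.mpr hdneg)]
    have hy : b.eval 0 * n.eval 0 * (a.leadingCoeff * d.leadingCoeff)
        < a.eval 0 * d.eval 0 * (a.leadingCoeff * d.leadingCoeff) := by nlinarith [hppos]
    have h1 : |a.eval 0 * d.eval 0| * |a.leadingCoeff * d.leadingCoeff|
        ≤ |b.eval 0 * n.eval 0| * |a.leadingCoeff * d.leadingCoeff| := by
      rw [← abs_mul, ← abs_mul, abs_of_neg hx, abs_of_neg (lt_trans hy hx)]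
      linarith
    exact le_of_mul_le_mul_right h1 (abs_pos.mpr hLne)
  rw [abs_div, one_div_div]
  refine le_trans ?_ (hinf_ge_zero_val b a ha (Polynomial.natDegree_le_natDegree hdeg) (by
    intro ω hω
    exact absurd ((hstable _ hω)) (by simp)))
  rw [div_le_div_iff₀ (abs_pos.mpr hn0) (abs_pos.mpr ha0)]
  rw [abs_mul, abs_mul] at hkey
  nlinarith [abs_nonneg (a.eval 0), abs_nonneg (d.eval 0), abs_nonneg (b.eval 0),
    abs_nonneg (n.eval 0)]


lemma upperBound (n d : ℝ[X]) (hd : d ≠ 0) (hsp : n.degree < d.degree)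
    (hnoimag : ∀ ω : ℝ, (d.map (algebraMap ℝ ℂ)).eval ((ω : ℂ) * Complex.I) ≠ 0)
    (hodd : Odd (orhpCount d)) (hg0 : n.eval 0 / d.eval 0 ≠ 0)
    (hstab0 : OmegaStable (d - C (1 / (n.eval 0 / d.eval 0)) * n) 0) (η : ℝ) (hη : 0 < η) :
    ∃ ε : ℝ, 0 < ε ∧ ε ≤ η ∧
      Stabilizes (C ((1 + ε) * (1 / (n.eval 0 / d.eval 0)))) 1 n d := by
  have hd0 : d.eval 0 ≠ 0 := d0ne d hnoimag
  have hn0 : n.eval 0 ≠ 0 := fun h => hg0 (by rw [h, zero_div])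
  have hnne : n ≠ 0 := fun h => hn0 (by rw [h]; simp)
  set c := 1 / (n.eval 0 / d.eval 0) with hcdef
  have hc : c = d.eval 0 / n.eval 0 := by rw [hcdef, one_div_div]
  have hcne : c ≠ 0 := by rw [hc]; exact div_ne_zero hd0 hn0
  have hcn0 : c * n.eval 0 = d.eval 0 := by rw [hc]; field_simp
  set chp := d - C c * n with hchp
  have hm : Polynomial.rootMultiplicity 0 (chp.map (algebraMap ℝ ℂ)) = 1 := by
    have := hstab0.1
    simpa using this
  have hoth : ∀ z : ℂ, (chp.map (algebraMap ℝ ℂ)).eval z = 0 → z ≠ 0 → z.re < 0 := by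
    intro z hz hzne
    have := hstab0.2.2 z hz
    simp only [Complex.ofReal_zero, zero_mul, neg_zero] at this
    exact this hzne hzne
  have hchpne : chp ≠ 0 := by
    intro h
    rw [h] at hm
    simp at hm
  have hchp0 : chp.eval 0 = 0 := by
    simp [hchp, hcn0]
  obtain ⟨h, hfac⟩ : ∃ h, chp = X * h := by
    have hdvd : (X - C (0:ℝ)) ∣ chp := Polynomial.dvd_iff_isRoot.mpr hchp0
    obtain ⟨h, hh⟩ := hdvd
    exact ⟨h, by simpa using hh⟩
  have hhne : h ≠ 0 := by
    intro h0
    rw [h0, mul_zero] at hfac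
    exact hchpne hfac
  have hdegCcn : (C c * n).degree < d.degree := by
    rw [Polynomial.degree_mul, Polynomial.degree_C hcne, zero_add]
    exact hsp
  have hchp2 : chp = -(C c * n) + d := by rw [hchp]; ring
  have hdegchp : chp.degree = d.degree := by
    rw [hchp2, Polynomial.degree_add_eq_right_of_degree_lt (by rwa [Polynomial.degree_neg])]
  have hlcchp : chp.leadingCoeff = d.leadingCoeff := by
    rw [hchp2, Polynomial.leadingCoeff_add_of_degree_lt (by rwa [Polynomial.degree_neg])]
  have hlch : h.leadingCoeff = d.leadingCoeff := by
    rw [← hlcchp, hfac, Polynomial.leadingCoeff_mul, Polynomial.leadingCoeff_X, one_mul]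
  have hmapfac : chp.map (algebraMap ℝ ℂ) = X * h.map (algebraMap ℝ ℂ) := by
    rw [hfac, Polynomial.map_mul, Polynomial.map_X]
  have hHmapne : h.map (algebraMap ℝ ℂ) ≠ 0 := by
    simpa [Polynomial.map_ne_zero_iff (algebraMap ℝ ℂ).injective] using hhne
  have hchpmapne : chp.map (algebraMap ℝ ℂ) ≠ 0 := by
    simpa [Polynomial.map_ne_zero_iff (algebraMap ℝ ℂ).injective] using hchpne
  have hh0 : h.eval 0 ≠ 0 := by
    intro h0
    have hXne : (X : ℂ[X]) ≠ 0 := Polynomial.X_ne_zero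
    have h1 : Polynomial.rootMultiplicity 0 (chp.map (algebraMap ℝ ℂ))
        = Polynomial.rootMultiplicity 0 (X : ℂ[X])
          + Polynomial.rootMultiplicity 0 (h.map (algebraMap ℝ ℂ)) := by
      rw [hmapfac]
      exact Polynomial.rootMultiplicity_mul (by rw [← hmapfac]; exact hchpmapne)
    have h2 : Polynomial.rootMultiplicity (0:ℂ) (X : ℂ[X]) = 1 := by
      rw [show (X : ℂ[X]) = X - C 0 by simp]
      exact Polynomial.rootMultiplicity_X_sub_C_self
    rw [hm, h2] at h1
    have h3 : Polynomial.rootMultiplicity (0:ℂ) (h.map (algebraMap ℝ ℂ)) = 0 := by omega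
    have h4 : ¬ (h.map (algebraMap ℝ ℂ)).IsRoot 0 := by
      rw [← Polynomial.rootMultiplicity_pos hHmapne] at *
      omega
    apply h4
    unfold Polynomial.IsRoot
    rw [show (0:ℂ) = ((0:ℝ):ℂ) by simp, mapEvalReal, h0, Complex.ofReal_zero]
  have hH0ne : (h.map (algebraMap ℝ ℂ)).eval 0 ≠ 0 := by
    rw [show (0:ℂ) = ((0:ℝ):ℂ) by simp, mapEvalReal]
    exact_mod_cast hh0
  have hhstable : ∀ z : ℂ, (h.map (algebraMap ℝ ℂ)).eval z = 0 → z.re < 0 := by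
    intro z hz
    have hz0 : z ≠ 0 := by
      rintro rfl
      exact hH0ne hz
    apply hoth z _ hz0
    rw [hmapfac, Polynomial.eval_mul, Polynomial.eval_X, hz, mul_zero]
  have hhpos : 0 < h.eval 0 * h.leadingCoeff := posOfStable hhstable
  have hdlc : d.eval 0 * d.leadingCoeff < 0 := negOfOdd hd (himOfNoImag hnoimag) hodd
  have hd0h0 : d.eval 0 * h.eval 0 < 0 := by
    have h1 : 0 < h.eval 0 * d.leadingCoeff := hlch ▸ hhpos
    have h2 : d.leadingCoeff ≠ 0 := Polynomial.leadingCoeff_ne_zero.mpr hd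
    nlinarith [mul_pos h1 (neg_pos.mpr hdlc), mul_self_pos.mpr h2]
  -- Region i : small ball around 0
  have hφ0 : (((c:ℂ) * (n.map (algebraMap ℝ ℂ)).eval 0) / (h.map (algebraMap ℝ ℂ)).eval 0).re
      < 0 := by
    rw [show (0:ℂ) = ((0:ℝ):ℂ) by simp, mapEvalReal, mapEvalReal, ← Complex.ofReal_mul,
      ← Complex.ofReal_div, Complex.ofReal_re, hcn0]
    have heq : d.eval 0 / h.eval 0 = (d.eval 0 * h.eval 0) / (h.eval 0 * h.eval 0) :=
      (mul_div_mul_right _ _ hh0).symm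
    rw [heq]
    exact div_neg_of_neg_of_pos hd0h0 (mul_self_pos.mpr hh0)
  have hcontφ : ContinuousAt (fun z : ℂ =>
      (((c:ℂ) * (n.map (algebraMap ℝ ℂ)).eval z) / (h.map (algebraMap ℝ ℂ)).eval z).re) 0 := by
    apply Complex.continuous_re.continuousAt.comp
    exact ((continuous_const.mul (n.map (algebraMap ℝ ℂ)).continuous).continuousAt).div
      ((h.map (algebraMap ℝ ℂ)).continuous.continuousAt) hH0ne
  have hev1 : ∀ᶠ z : ℂ in nhds 0, (h.map (algebraMap ℝ ℂ)).eval z ≠ 0 :=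
    ((h.map (algebraMap ℝ ℂ)).continuous.continuousAt).eventually_ne hH0ne
  have hev2 : ∀ᶠ z : ℂ in nhds 0,
      (((c:ℂ) * (n.map (algebraMap ℝ ℂ)).eval z) / (h.map (algebraMap ℝ ℂ)).eval z).re < 0 :=
    Filter.Tendsto.eventually_lt_const hφ0 hcontφ
  obtain ⟨r₀, hr₀, hball⟩ := Metric.eventually_nhds_iff.mp (hev1.and hev2)
  have hr₁ : 0 < r₀ / 2 := half_pos hr₀
  -- Region ii : away from 0, right half plane
  have hndeg : d.natDegree = 1 + h.natDegree := by
    have e1 : chp.natDegree = d.natDegree := Polynomial.natDegree_eq_of_degree_eq hdegchp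
    have e2 : chp.natDegree = 1 + h.natDegree := by
      rw [hfac, Polynomial.natDegree_mul Polynomial.X_ne_zero hhne, Polynomial.natDegree_X]
    omega
  have hnnlt : n.natDegree < d.natDegree := Polynomial.natDegree_lt_natDegree hnne hsp
  have hXHne : (X * h.map (algebraMap ℝ ℂ)) ≠ 0 := mul_ne_zero Polynomial.X_ne_zero hHmapne
  have hXHdeg : (X * h.map (algebraMap ℝ ℂ)).natDegree = d.natDegree := by
    rw [Polynomial.natDegree_mul Polynomial.X_ne_zero hHmapne, Polynomial.natDegree_X,
      Polynomial.natDegree_map, hndeg]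
  have hXHeval : ∀ z : ℂ, (X * h.map (algebraMap ℝ ℂ)).eval z
      = z * (h.map (algebraMap ℝ ℂ)).eval z := by
    intro z
    rw [Polynomial.eval_mul, Polynomial.eval_X]
  obtain ⟨C₁, hC₁0, hC₁⟩ := evalUpper (n.map (algebraMap ℝ ℂ))
  obtain ⟨R, hR1, hR⟩ := evalLower (X * h.map (algebraMap ℝ ℂ)) hXHne
  have hLpos : 0 < ‖(X * h.map (algebraMap ℝ ℂ)).leadingCoeff‖ :=
    norm_pos_iff.mpr (Polynomial.leadingCoeff_ne_zero.mpr hXHne)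
  have hfarK : ∀ z : ℂ, R ≤ ‖z‖ → ‖(c:ℂ) * (n.map (algebraMap ℝ ℂ)).eval z‖
      ≤ (|c| * C₁ / (‖(X * h.map (algebraMap ℝ ℂ)).leadingCoeff‖ / 2))
        * ‖(X * h.map (algebraMap ℝ ℂ)).eval z‖ := by
    intro z hz
    have hz1 : 1 ≤ ‖z‖ := le_trans hR1 hz
    have h1 : ‖(c:ℂ) * (n.map (algebraMap ℝ ℂ)).eval z‖ ≤ |c| * (C₁ * ‖z‖ ^ d.natDegree) := by
      rw [norm_mul, Complex.norm_real, Real.norm_eq_abs]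
      apply mul_le_mul_of_nonneg_left _ (abs_nonneg c)
      refine (hC₁ z hz1).trans ?_
      apply mul_le_mul_of_nonneg_left _ hC₁0
      apply pow_le_pow_right₀ hz1
      rw [Polynomial.natDegree_map]
      exact hnnlt.le
    have h2 : ‖(X * h.map (algebraMap ℝ ℂ)).leadingCoeff‖ / 2 * ‖z‖ ^ d.natDegree
        ≤ ‖(X * h.map (algebraMap ℝ ℂ)).eval z‖ := by
      have := hR z hz
      rwa [hXHdeg] at this
    have habs : ∀ (a b m P : ℝ), m ≠ 0 → a * b / m * (m * P) = a * (b * P) := by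
      intros a b m P hm
      field_simp
    have h3 : (|c| * C₁ / (‖(X * h.map (algebraMap ℝ ℂ)).leadingCoeff‖ / 2))
        * (‖(X * h.map (algebraMap ℝ ℂ)).leadingCoeff‖ / 2 * ‖z‖ ^ d.natDegree)
        = |c| * (C₁ * ‖z‖ ^ d.natDegree) :=
      habs _ _ _ _ (by positivity)
    have hK₁0' : (0:ℝ) ≤ |c| * C₁ / (‖(X * h.map (algebraMap ℝ ℂ)).leadingCoeff‖ / 2) := by
      positivity
    have h4 := mul_le_mul_of_nonneg_left h2 hK₁0'
    linarith [h1, h3, h4]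
  obtain ⟨K, hK0, hK⟩ : ∃ K : ℝ, 0 ≤ K ∧ ∀ z : ℂ, 0 ≤ z.re → r₀ / 2 ≤ ‖z‖ →
      ‖(c:ℂ) * (n.map (algebraMap ℝ ℂ)).eval z‖
        ≤ K * ‖(X * h.map (algebraMap ℝ ℂ)).eval z‖ := by
    have hK₁0 : (0:ℝ) ≤ |c| * C₁ / (‖(X * h.map (algebraMap ℝ ℂ)).leadingCoeff‖ / 2) := by
      positivity
    have hSclosed2 : IsClosed {z : ℂ | r₀ / 2 ≤ ‖z‖ ∧ 0 ≤ z.re} :=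
      IsClosed.inter (isClosed_le continuous_const continuous_norm)
        (isClosed_le continuous_const Complex.continuous_re)
    have hScomp : IsCompact (Metric.closedBall (0:ℂ) R ∩ {z : ℂ | r₀ / 2 ≤ ‖z‖ ∧ 0 ≤ z.re}) :=
      (isCompact_closedBall _ _).inter_right hSclosed2
    have hXHne0 : ∀ z ∈ Metric.closedBall (0:ℂ) R ∩ {z : ℂ | r₀ / 2 ≤ ‖z‖ ∧ 0 ≤ z.re},
        (X * h.map (algebraMap ℝ ℂ)).eval z ≠ 0 := by
      intro z hz
      have hz0 : z ≠ 0 := by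
        rintro rfl
        have := hz.2.1
        simp at this
        linarith
      rw [hXHeval]
      apply mul_ne_zero hz0
      intro hH
      exact absurd (hhstable z hH) (not_lt.mpr hz.2.2)
    rcases (Metric.closedBall (0:ℂ) R ∩ {z : ℂ | r₀ / 2 ≤ ‖z‖ ∧ 0 ≤ z.re}).eq_empty_or_nonempty
      with hSe | hSne
    · refine ⟨_, hK₁0, ?_⟩
      intro z hre hz
      have hnotball : z ∉ Metric.closedBall (0:ℂ) R := by
        intro hmem
        exact Set.eq_empty_iff_forall_notMem.mp hSe z ⟨hmem, hz, hre⟩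
      apply hfarK
      rw [Metric.mem_closedBall, dist_zero_right] at hnotball
      linarith [not_le.mp hnotball]
    · obtain ⟨z₁, hz₁S, hz₁min⟩ := hScomp.exists_isMinOn hSne
        ((continuous_norm.comp (X * h.map (algebraMap ℝ ℂ)).continuous).continuousOn)
      obtain ⟨z₂, hz₂S, hz₂max⟩ := hScomp.exists_isMaxOn hSne
        ((continuous_norm.comp (continuous_const.mul
          (n.map (algebraMap ℝ ℂ)).continuous)).continuousOn)
      have hm0 : 0 < ‖(X * h.map (algebraMap ℝ ℂ)).eval z₁‖ :=
        norm_pos_iff.mpr (hXHne0 z₁ hz₁S)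
      refine ⟨max (|c| * C₁ / (‖(X * h.map (algebraMap ℝ ℂ)).leadingCoeff‖ / 2))
        (‖(c:ℂ) * (n.map (algebraMap ℝ ℂ)).eval z₂‖
          / ‖(X * h.map (algebraMap ℝ ℂ)).eval z₁‖),
        le_trans hK₁0 (le_max_left _ _), ?_⟩
      intro z hre hz
      by_cases hcase : ‖z‖ ≤ R
      · have hzS : z ∈ Metric.closedBall (0:ℂ) R ∩ {z : ℂ | r₀ / 2 ≤ ‖z‖ ∧ 0 ≤ z.re} :=
          ⟨Metric.mem_closedBall.mpr (by rwa [dist_zero_right]), hz, hre⟩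
        have step : ‖(c:ℂ) * (n.map (algebraMap ℝ ℂ)).eval z₂‖
            ≤ (‖(c:ℂ) * (n.map (algebraMap ℝ ℂ)).eval z₂‖
              / ‖(X * h.map (algebraMap ℝ ℂ)).eval z₁‖)
              * ‖(X * h.map (algebraMap ℝ ℂ)).eval z‖ := by
          rw [div_mul_eq_mul_div, le_div_iff₀ hm0]
          exact mul_le_mul_of_nonneg_left (hz₁min hzS) (norm_nonneg _)
        have final : ‖(c:ℂ) * (n.map (algebraMap ℝ ℂ)).eval z‖
            ≤ (‖(c:ℂ) * (n.map (algebraMap ℝ ℂ)).eval z₂‖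
              / ‖(X * h.map (algebraMap ℝ ℂ)).eval z₁‖)
              * ‖(X * h.map (algebraMap ℝ ℂ)).eval z‖ := le_trans (hz₂max hzS) step
        exact le_trans final (mul_le_mul_of_nonneg_right (le_max_right _ _) (norm_nonneg _))
      · exact le_trans (hfarK z (by linarith [not_le.mp hcase]))
          (mul_le_mul_of_nonneg_right (le_max_left _ _) (norm_nonneg _))
  -- choose ε and prove stabilization
  refine ⟨min η (1/(2*(K+1))), lt_min hη (by positivity), min_le_left _ _, ?_⟩
  set ε := min η (1/(2*(K+1))) with hεdef
  have hε0 : 0 < ε := lt_min hη (by positivity)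
  have hεK : ε * K < 1 := by
    have h1 : ε ≤ 1/(2*(K+1)) := min_le_right _ _
    have h2 : (0:ℝ) < 2*(K+1) := by linarith
    calc ε * K ≤ (1/(2*(K+1))) * K := mul_le_mul_of_nonneg_right h1 hK0
      _ = K / (2*(K+1)) := by ring
      _ < 1 := (div_lt_one h2).mpr (by linarith)
  refine ⟨one_ne_zero, isCoprime_one_right, ?_, ?_, ?_⟩
  · rw [Polynomial.degree_one]
    exact Polynomial.degree_C_le
  · intro z hz
    rw [Polynomial.map_one, Polynomial.eval_one] at hz
    exact absurd hz one_ne_zero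
  · intro z hz
    by_contra hrec
    push_neg at hrec
    have hdid : d = X * h + C c * n := by
      have h5 : d - C c * n = X * h := by rw [← hchp]; exact hfac
      linear_combination h5
    have hDeval : (d.map (algebraMap ℝ ℂ)).eval z
        = z * (h.map (algebraMap ℝ ℂ)).eval z + (c:ℂ) * (n.map (algebraMap ℝ ℂ)).eval z := by
      conv_lhs => rw [hdid]
      simp only [Polynomial.map_add, Polynomial.map_mul, Polynomial.map_X, Polynomial.map_C,
        Polynomial.eval_add, Polynomial.eval_mul, Polynomial.eval_X, Polynomial.eval_C]
      rfl
    simp only [Polynomial.map_sub, Polynomial.map_mul, Polynomial.map_one, Polynomial.map_C,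
      Polynomial.eval_sub, Polynomial.eval_mul, Polynomial.eval_one, Polynomial.eval_C,
      one_mul] at hz
    rw [hDeval] at hz
    have hzeq : z * (h.map (algebraMap ℝ ℂ)).eval z
        = (ε:ℂ) * ((c:ℂ) * (n.map (algebraMap ℝ ℂ)).eval z) := by
      have hcast : (algebraMap ℝ ℂ) ((1 + ε) * c) = (1 + (ε:ℂ)) * (c:ℂ) := by
        push_cast
        rfl
      rw [hcast] at hz
      linear_combination hz
    by_cases hcase : ‖z‖ < r₀
    · obtain ⟨hHne, hφ⟩ := hball (show dist z 0 < r₀ by rwa [dist_zero_right])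
      have hzval : z = ((ε:ℂ)
          * ((c:ℂ) * (n.map (algebraMap ℝ ℂ)).eval z)) / (h.map (algebraMap ℝ ℂ)).eval z :=
        (eq_div_iff hHne).mpr hzeq
      have hzre : z.re = ε
          * (((c:ℂ) * (n.map (algebraMap ℝ ℂ)).eval z) / (h.map (algebraMap ℝ ℂ)).eval z).re := by
        conv_lhs => rw [hzval, mul_div_assoc]
        exact Complex.re_ofReal_mul _ _
      have : z.re < 0 := by
        rw [hzre]
        exact mul_neg_of_pos_of_neg hε0 hφ
      linarith
    · have hz2 : r₀ / 2 ≤ ‖z‖ := by linarith [not_lt.mp hcase]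
      have hKz := hK z hrec hz2
      have hpos : 0 < ‖(X * h.map (algebraMap ℝ ℂ)).eval z‖ := by
        rw [hXHeval]
        apply norm_pos_iff.mpr
        apply mul_ne_zero
        · rintro rfl
          simp at hz2
          linarith
        · intro hH
          exact absurd (hhstable z hH) (not_lt.mpr hrec)
      have hnormeq : ‖(X * h.map (algebraMap ℝ ℂ)).eval z‖
          = ε * ‖(c:ℂ) * (n.map (algebraMap ℝ ℂ)).eval z‖ := by
        rw [hXHeval, hzeq, norm_mul, Complex.norm_real, Real.norm_eq_abs, abs_of_pos hε0]
      nlinarith [mul_le_mul_of_nonneg_left hKz hε0.le]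


lemma hinf_const (e : ℝ) : hinfNorm (C e) 1 = |e| := by
  unfold hinfNorm ratEval
  have hval : ∀ ω : ℝ, ‖((((C e : ℝ[X]).map (algebraMap ℝ ℂ)).eval
      ((ω : ℂ) * Complex.I)) / (((1 : ℝ[X]).map (algebraMap ℝ ℂ)).eval ((ω : ℂ) * Complex.I)))‖
      = |e| := by
    intro ω
    rw [Polynomial.map_C, Polynomial.eval_C, Polynomial.map_one, Polynomial.eval_one, div_one]
    exact (Complex.norm_real e).trans (Real.norm_eq_abs e)
  simp only [hval]
  exact ciSup_const

/-- if `g` is strictly proper with no imaginary-axis poles, an odd number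
of ORHP poles, `g(0) ≠ 0`, and the constant perturbation `δ₀ = 1/g(0)` achieves
`0`-stability (char. polynomial `d − (1/g(0)) n`), then `ρ*(g) = 1/|g(0)|`. -/
theorem stmt5 (n d : Polynomial ℝ) (hd : d ≠ 0) (hcop : IsCoprime n d)
    (hsp : n.degree < d.degree)
    (hnoimag : ∀ ω : ℝ, (d.map (algebraMap ℝ ℂ)).eval ((ω : ℂ) * Complex.I) ≠ 0)
    (hodd : Odd (orhpCount d))
    (hg0 : n.eval 0 / d.eval 0 ≠ 0)
    (hstab0 : OmegaStable (d - Polynomial.C (1 / (n.eval 0 / d.eval 0)) * n) 0) :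
    RIR n d = ENNReal.ofReal (1 / |n.eval 0 / d.eval 0|) := by
  apply le_antisymm
  · refine ENNReal.le_of_forall_pos_le_add ?_
    intro δ hδ _
    have hδR : (0:ℝ) < (δ : ℝ) := hδ
    have hcabs : |1 / (n.eval 0 / d.eval 0)| = 1 / |n.eval 0 / d.eval 0| := by
      rw [abs_div, abs_one]
    obtain ⟨ε, hε0, hεle, hstab⟩ := upperBound n d hd hsp hnoimag hodd hg0 hstab0
      ((δ : ℝ) / (|1 / (n.eval 0 / d.eval 0)| + 1)) (by positivity)
    have hmem : ENNReal.ofReal (hinfNorm (C ((1 + ε) * (1 / (n.eval 0 / d.eval 0)))) 1)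
        ∈ { r : ENNReal | ∃ b a : Polynomial ℝ,
          Stabilizes b a n d ∧ r = ENNReal.ofReal (hinfNorm b a) } :=
      ⟨_, _, hstab, rfl⟩
    refine le_trans (sInf_le hmem) ?_
    rw [hinf_const, abs_mul, abs_of_pos (by linarith : (0:ℝ) < 1 + ε)]
    have h1 : (1 + ε) * |1 / (n.eval 0 / d.eval 0)| ≤ 1 / |n.eval 0 / d.eval 0| + (δ : ℝ) := by
      have h2 : ε * |1 / (n.eval 0 / d.eval 0)| ≤ (δ : ℝ) := by
        have h3 : ε * |1 / (n.eval 0 / d.eval 0)|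
            ≤ ((δ : ℝ) / (|1 / (n.eval 0 / d.eval 0)| + 1)) * |1 / (n.eval 0 / d.eval 0)| :=
          mul_le_mul_of_nonneg_right hεle (abs_nonneg _)
        refine h3.trans ?_
        rw [div_mul_eq_mul_div, div_le_iff₀ (by positivity)]
        nlinarith [abs_nonneg (1 / (n.eval 0 / d.eval 0))]
      rw [← hcabs]
      nlinarith [abs_nonneg (1 / (n.eval 0 / d.eval 0))]
    calc ENNReal.ofReal ((1 + ε) * |1 / (n.eval 0 / d.eval 0)|)
        ≤ ENNReal.ofReal (1 / |n.eval 0 / d.eval 0| + (δ : ℝ)) := ENNReal.ofReal_le_ofReal h1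
      _ = ENNReal.ofReal (1 / |n.eval 0 / d.eval 0|) + ENNReal.ofReal ((δ : ℝ)) :=
        ENNReal.ofReal_add (by positivity) hδR.le
      _ = ENNReal.ofReal (1 / |n.eval 0 / d.eval 0|) + (δ : ENNReal) := by
        rw [ENNReal.ofReal_coe_nnreal]
  · refine le_sInf ?_
    rintro r ⟨b, a, hstab, rfl⟩
    exact ENNReal.ofReal_le_ofReal (lowerBound n d b a hd hsp hnoimag hodd hg0 hstab)
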